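/- Let A be an n×n real symmetric positive semidefinite matrix that is not invertible but nonzero, i.e., 1 ≤ rank(A) ≤ n−1. Then lim_{ε→0+} log(det(ε·I_n + A))/log(ε) = n − rank(A). -/

import Mathlib

open Filter

/-- det of a shifted Hermitian matrix is the product of shifted eigenvalues. -/
lemma det_smul_one_add_eq_prod {n : ℕ} (A : Matrix (Fin n) (Fin n) ℝ)
    (hA : A.IsHermitian) (ε : ℝ) :
    (ε • (1 : Matrix (Fin n) (Fin n) ℝ) + A).det
      = ∏ i, (ε + hA.eigenvalues i) := by
  have hU := (Matrix.mem_unitaryGroup_iff).mp (hA.eigenvectorUnitary).2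
  have key : ε • (1 : Matrix (Fin n) (Fin n) ℝ) + A
      = (hA.eigenvectorUnitary : Matrix (Fin n) (Fin n) ℝ)
        * Matrix.diagonal (fun i => ε + hA.eigenvalues i)
        * (star (hA.eigenvectorUnitary : Matrix (Fin n) (Fin n) ℝ)) := by
    have hdiag : Matrix.diagonal (fun i => ε + hA.eigenvalues i)
        = ε • (1 : Matrix (Fin n) (Fin n) ℝ)
          + Matrix.diagonal (RCLike.ofReal ∘ hA.eigenvalues) := by
      ext i j
      by_cases h : i = j <;>
        simp [h, Matrix.one_apply, Matrix.diagonal_apply, Function.comp]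
    rw [hdiag, Matrix.mul_add, Matrix.add_mul, Matrix.mul_smul, Matrix.mul_one,
      Matrix.smul_mul, hU]
    exact congrArg (ε • (1 : Matrix (Fin n) (Fin n) ℝ) + ·) hA.spectral_theorem
  rw [key, Matrix.det_mul_right_comm, hU, one_mul, Matrix.det_diagonal]

theorem log_det_perturbation_limit (n : ℕ) (A : Matrix (Fin n) (Fin n) ℝ)
    (hsymm : A.IsSymm) (hpsd : A.PosSemidef) (hrank₁ : 1 ≤ A.rank)
    (hrank₂ : A.rank ≤ n - 1) :
    Tendsto (fun ε : ℝ =>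
        Real.log ((ε • (1 : Matrix (Fin n) (Fin n) ℝ) + A).det) / Real.log ε)
      (nhdsWithin 0 (Set.Ioi 0)) (nhds ((n : ℝ) - A.rank)) := by
  classical
  have hA : A.IsHermitian := hpsd.isHermitian
  set lam := hA.eigenvalues with hlam
  have hnonneg : ∀ i, 0 ≤ lam i := hpsd.eigenvalues_nonneg
  set T : Finset (Fin n) := Finset.univ.filter (fun i => lam i ≠ 0) with hT
  have hcardT : T.card = A.rank := by
    rw [hA.rank_eq_card_non_zero_eigs, Fintype.card_subtype]
  have hpos : ∀ i ∈ T, 0 < lam i := fun i hi =>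
    lt_of_le_of_ne (hnonneg i) (Ne.symm (Finset.mem_filter.mp hi).2)
  have hrank_le : A.rank ≤ n := by
    omega
  have hcardTc : ((Finset.univ.filter (fun i => ¬ lam i ≠ 0)).card : ℝ)
      = (n : ℝ) - A.rank := by
    have := Finset.card_filter_add_card_filter_not
      (s := (Finset.univ : Finset (Fin n))) (p := fun i => lam i ≠ 0)
    rw [← hcardT]
    have hn : T.card + (Finset.univ.filter (fun i => ¬ lam i ≠ 0)).card = n := by
      simpa [hT] using this
    have : (Finset.univ.filter (fun i => ¬ lam i ≠ 0)).card = n - T.card := by omega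
    rw [this]
    have hTn : T.card ≤ n := by omega
    push_cast [Nat.cast_sub hTn]
    ring
  -- the auxiliary limit
  have hlog : Tendsto Real.log (nhdsWithin (0:ℝ) (Set.Ioi 0)) atBot :=
    Real.tendsto_log_nhdsGT_zero
  have hnum : Tendsto (fun ε : ℝ => ∑ i ∈ T, Real.log (ε + lam i))
      (nhdsWithin (0:ℝ) (Set.Ioi 0)) (nhds (∑ i ∈ T, Real.log (lam i))) := by
    apply tendsto_finset_sum
    intro i hi
    have h1 : Tendsto (fun ε : ℝ => ε + lam i) (nhdsWithin (0:ℝ) (Set.Ioi 0))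
        (nhds (0 + lam i)) :=
      (tendsto_id.add tendsto_const_nhds).mono_left nhdsWithin_le_nhds
    rw [zero_add] at h1
    exact ((Real.continuousAt_log (ne_of_gt (hpos i hi))).tendsto).comp h1
  have haux : Tendsto (fun ε : ℝ => (∑ i ∈ T, Real.log (ε + lam i)) / Real.log ε)
      (nhdsWithin (0:ℝ) (Set.Ioi 0)) (nhds 0) := by
    have h1 : Tendsto (fun ε : ℝ => (∑ i ∈ T, Real.log (ε + lam i)) / (-Real.log ε))
        (nhdsWithin (0:ℝ) (Set.Ioi 0)) (nhds 0) :=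
      hnum.div_atTop ((tendsto_neg_atBot_atTop).comp hlog)
    have := h1.neg
    rw [neg_zero] at this
    refine this.congr fun ε => ?_
    rw [div_neg, neg_neg]
  have hfinal : Tendsto (fun ε : ℝ =>
      (∑ i ∈ T, Real.log (ε + lam i)) / Real.log ε + ((n : ℝ) - A.rank))
      (nhdsWithin (0:ℝ) (Set.Ioi 0)) (nhds ((n : ℝ) - A.rank)) := by
    have := haux.add (tendsto_const_nhds (x := (n : ℝ) - A.rank)
      (f := nhdsWithin (0:ℝ) (Set.Ioi 0)))
    rwa [zero_add] at this
  refine hfinal.congr' ?_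
  filter_upwards [self_mem_nhdsWithin,
    Ioo_mem_nhdsGT_of_mem (by norm_num : (0:ℝ) ∈ Set.Ico 0 1)] with ε hε hε1
  have hε0 : 0 < ε := hε
  have hεne1 : Real.log ε ≠ 0 := by
    have : ε < 1 := hε1.2
    exact ne_of_lt (Real.log_neg hε0 this)
  have hdet : (ε • (1 : Matrix (Fin n) (Fin n) ℝ) + A).det
      = ∏ i, (ε + lam i) := det_smul_one_add_eq_prod A hA ε
  have hfacpos : ∀ i, 0 < ε + lam i := fun i => by
    have := hnonneg i; linarith
  have hlogprod : Real.log (∏ i, (ε + lam i)) = ∑ i, Real.log (ε + lam i) :=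
    Real.log_prod (fun i _ => ne_of_gt (hfacpos i))
  have hsplit : ∑ i, Real.log (ε + lam i)
      = (∑ i ∈ T, Real.log (ε + lam i))
        + ((Finset.univ.filter (fun i => ¬ lam i ≠ 0)).card : ℝ) * Real.log ε := by
    rw [← Finset.sum_filter_add_sum_filter_not Finset.univ (fun i => lam i ≠ 0)]
    congr 1
    rw [Finset.sum_congr rfl (fun i hi => ?_), Finset.sum_const, nsmul_eq_mul]
    have : lam i = 0 := by
      have := (Finset.mem_filter.mp hi).2
      push_neg at this
      exact this
    rw [this, add_zero]
  rw [hdet, hlogprod, hsplit, hcardTc, add_div, mul_div_assoc,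
    div_self hεne1, mul_one]
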